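/- Let N ≥ 1, let p be a prime with 2N < p, let S be a subset of the integer interval [1, 2N], and let S' ⊆ S. Set k' = |S \ S'|. Then S \ S' is the unique subset T of S with |T| = k' satisfying, for every i with 1 ≤ i ≤ k', the congruence Σ_{z ∈ T} z^i ≡ Σ_{x ∈ S} x^i − Σ_{y ∈ S'} y^i (mod p). (Formally: a subset T ⊆ S satisfies |T| = k' and these k' congruences if and only if T = S \ S'.) -/

import Mathlib

open Finset Polynomial

/-- Newton's identity evaluated at the elements of a finset of naturals, in `ZMod p`. -/
private lemma mn_newton (p : ℕ) (A : Finset ℕ) {n : ℕ} (hn : 0 < n) :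
    (∑ z ∈ A, (z : ZMod p) ^ n) =
      (-1) ^ (n + 1) * n * (A.val.map (Nat.cast : ℕ → ZMod p)).esymm n -
      ∑ a ∈ (Finset.HasAntidiagonal.antidiagonal n).filter (fun a => a.1 ∈ Set.Ioo 0 n),
        (-1) ^ a.1 * (A.val.map (Nat.cast : ℕ → ZMod p)).esymm a.1 *
          ∑ z ∈ A, (z : ZMod p) ^ a.2 := by
  classical
  have key := congrArg (MvPolynomial.aeval (fun x : {x // x ∈ A} => ((x : ℕ) : ZMod p)))
    (MvPolynomial.psum_eq_mul_esymm_sub_sum {x // x ∈ A} (ZMod p) n hn)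
  have hps : ∀ m, MvPolynomial.aeval (fun x : {x // x ∈ A} => ((x : ℕ) : ZMod p))
      (MvPolynomial.psum {x // x ∈ A} (ZMod p) m) = ∑ z ∈ A, (z : ZMod p) ^ m := by
    intro m
    simp only [MvPolynomial.psum, map_sum, map_pow, MvPolynomial.aeval_X]
    exact Finset.sum_coe_sort A (fun z => (z : ZMod p) ^ m)
  have hmap : (Finset.univ.val.map (fun x : {x // x ∈ A} => ((x : ℕ) : ZMod p)))
      = A.val.map (Nat.cast : ℕ → ZMod p) := by
    rw [Finset.univ_eq_attach, Finset.attach_val]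
    rw [show (fun x : {x // x ∈ A} => ((x : ℕ) : ZMod p))
        = (Nat.cast : ℕ → ZMod p) ∘ Subtype.val from rfl]
    rw [← Multiset.map_map, Multiset.attach_map_val]
  have hes : ∀ m, MvPolynomial.aeval (fun x : {x // x ∈ A} => ((x : ℕ) : ZMod p))
      (MvPolynomial.esymm {x // x ∈ A} (ZMod p) m)
      = (A.val.map (Nat.cast : ℕ → ZMod p)).esymm m := by
    intro m
    rw [MvPolynomial.aeval_esymm_eq_multiset_esymm, hmap]
  rw [hps] at key
  rw [key]
  simp only [map_sub, map_mul, map_sum, map_pow, map_neg, map_one, map_natCast, hes, hps]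

/-- If two finsets of naturals have the same cardinality `k < p` and the same power sums
mod `p` up to `k`, they have the same elementary symmetric functions mod `p`. -/
private lemma mn_esymm (p : ℕ) (hp : p.Prime) {k : ℕ} (hkp : k < p) (T M : Finset ℕ)
    (hcT : T.card = k) (hcM : M.card = k)
    (hP : ∀ i, 1 ≤ i → i ≤ k → (∑ z ∈ T, (z : ZMod p) ^ i) = ∑ z ∈ M, (z : ZMod p) ^ i) :
    ∀ n, (T.val.map (Nat.cast : ℕ → ZMod p)).esymm n
        = (M.val.map (Nat.cast : ℕ → ZMod p)).esymm n := by
  haveI : Fact p.Prime := ⟨hp⟩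
  intro n
  induction n using Nat.strong_induction_on with
  | _ n ih =>
    rcases Nat.eq_zero_or_pos n with rfl | hn
    · simp [Multiset.esymm]
    rcases le_or_gt n k with hnk | hnk
    · -- use Newton's identity
      have hT := mn_newton p T hn
      have hM := mn_newton p M hn
      have hsum : (∑ a ∈ (Finset.HasAntidiagonal.antidiagonal n).filter (fun a => a.1 ∈ Set.Ioo 0 n),
            (-1) ^ a.1 * (T.val.map (Nat.cast : ℕ → ZMod p)).esymm a.1 *
              ∑ z ∈ T, (z : ZMod p) ^ a.2)
          = ∑ a ∈ (Finset.HasAntidiagonal.antidiagonal n).filter (fun a => a.1 ∈ Set.Ioo 0 n),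
            (-1) ^ a.1 * (M.val.map (Nat.cast : ℕ → ZMod p)).esymm a.1 *
              ∑ z ∈ M, (z : ZMod p) ^ a.2 := by
        apply Finset.sum_congr rfl
        intro a ha
        simp only [Finset.mem_filter, Finset.HasAntidiagonal.mem_antidiagonal, Set.mem_Ioo] at ha
        obtain ⟨hab, h0a, han⟩ := ha
        have ha2 : 1 ≤ a.2 := by omega
        have ha2' : a.2 ≤ k := by omega
        rw [ih a.1 (by omega), hP a.2 ha2 ha2']
      have hPn := hP n hn hnk
      rw [hT, hM, hsum, sub_left_inj] at hPn
      have hne : ((-1 : ZMod p) ^ (n + 1) * n) ≠ 0 := by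
        apply mul_ne_zero
        · exact pow_ne_zero _ (neg_ne_zero.mpr one_ne_zero)
        · intro h
          rw [ZMod.natCast_eq_zero_iff] at h
          have := Nat.le_of_dvd hn h
          omega
      exact mul_left_cancel₀ hne hPn
    · -- both sides are zero, as n exceeds the cardinality
      have hT' : T.card < n := by omega
      have hM' : M.card < n := by omega
      have h1 : (Multiset.map (Nat.cast : ℕ → ZMod p) T.val).card < n := by
        rwa [Multiset.card_map, ← Finset.card_def]
      have h2 : (Multiset.map (Nat.cast : ℕ → ZMod p) M.val).card < n := by
        rwa [Multiset.card_map, ← Finset.card_def]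
      rw [Multiset.esymm, Multiset.esymm,
        Multiset.powersetCard_eq_empty _ h1, Multiset.powersetCard_eq_empty _ h2]

/-- Two finsets of naturals below `p` with equal cardinalities and equal elementary symmetric
functions mod `p` are equal. -/
private lemma mn_eq (p : ℕ) (hp : p.Prime) (T M : Finset ℕ)
    (hTp : ∀ x ∈ T, x < p) (hMp : ∀ x ∈ M, x < p) (hc : T.card = M.card)
    (hes : ∀ n, (T.val.map (Nat.cast : ℕ → ZMod p)).esymm n
        = (M.val.map (Nat.cast : ℕ → ZMod p)).esymm n) : T = M := by
  haveI : Fact p.Prime := ⟨hp⟩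
  set f : ℕ → ZMod p := Nat.cast with hf
  have hcard : Multiset.card (T.val.map f) = Multiset.card (M.val.map f) := by
    rw [Multiset.card_map, Multiset.card_map, ← Finset.card_def, ← Finset.card_def]
    exact hc
  have hpoly : ((T.val.map f).map (fun r => X - C r)).prod
      = ((M.val.map f).map (fun r => X - C r)).prod := by
    ext j
    rcases le_or_gt j (Multiset.card (T.val.map f)) with hj | hj
    · rw [Multiset.prod_X_sub_C_coeff _ hj, Multiset.prod_X_sub_C_coeff _ (hcard ▸ hj),
        hcard, hes]
    · rw [Polynomial.coeff_eq_zero_of_natDegree_lt, Polynomial.coeff_eq_zero_of_natDegree_lt]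
      · rw [natDegree_multiset_prod_X_sub_C_eq_card]; omega
      · rw [natDegree_multiset_prod_X_sub_C_eq_card]; omega
  -- every element of M is an element of T
  have hsub : M ⊆ T := by
    intro z hz
    have hroot : Polynomial.eval ((z : ZMod p))
        (((M.val.map f).map (fun r => X - C r)).prod) = 0 := by
      rw [Polynomial.eval_multiset_prod]
      apply Multiset.prod_eq_zero
      simp only [Multiset.map_map, Multiset.mem_map, Function.comp_apply]
      exact ⟨z, Finset.mem_def.mp hz, by simp [hf]⟩
    rw [← hpoly, Polynomial.eval_multiset_prod, Multiset.prod_eq_zero_iff] at hroot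
    simp only [Multiset.map_map, Multiset.mem_map, Function.comp_apply] at hroot
    obtain ⟨t, htT, ht⟩ := hroot
    simp only [Polynomial.eval_sub, Polynomial.eval_X, Polynomial.eval_C, sub_eq_zero] at ht
    have hzt : z = t := by
      have := congrArg ZMod.val ht
      rwa [ZMod.val_cast_of_lt (hMp z hz), ZMod.val_cast_of_lt (hTp t htT)] at this
    rw [hzt]
    exact htT
  exact (Finset.eq_of_subset_of_card_le hsub (le_of_eq hc)).symm

/-- Missing numbers problem: for `S ⊆ [1, 2N]`, `S' ⊆ S` and a prime
`p > 2N`, the set `S \ S'` of missing numbers is the unique subset `T` of `S`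
with `|T| = |S \ S'|` whose first `|S \ S'|` power sums are congruent mod `p`
to the differences of the power sums of `S` and of `S'`. -/
theorem missing_numbers_unique
    (N p : ℕ) (hN : 1 ≤ N) (hp : p.Prime) (hpN : 2 * N < p)
    (S S' : Finset ℕ) (hS : S ⊆ Finset.Icc 1 (2 * N)) (hS' : S' ⊆ S) :
    ∀ T : Finset ℕ, T ⊆ S →
      ((T.card = (S \ S').card ∧
        ∀ i, 1 ≤ i → i ≤ (S \ S').card →
          (∑ z ∈ T, (z : ℤ) ^ i) ≡
            (∑ x ∈ S, (x : ℤ) ^ i) - (∑ y ∈ S', (y : ℤ) ^ i) [ZMOD (p : ℤ)])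
      ↔ T = S \ S') := by
  haveI : Fact p.Prime := ⟨hp⟩
  intro T hTS
  have hdiff : ∀ i : ℕ, (∑ x ∈ S, (x : ℤ) ^ i) - (∑ y ∈ S', (y : ℤ) ^ i)
      = ∑ z ∈ S \ S', (z : ℤ) ^ i := fun i => by
    rw [Finset.sum_sdiff_eq_sub hS']
  constructor
  · rintro ⟨hcard, hcong⟩
    -- translate congruences to equalities in ZMod p
    have hZ : ∀ i, 1 ≤ i → i ≤ (S \ S').card →
        (∑ z ∈ T, (z : ZMod p) ^ i) = ∑ z ∈ S \ S', (z : ZMod p) ^ i := by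
      intro i h1 h2
      have := hcong i h1 h2
      rw [hdiff i] at this
      have hcast : ((∑ z ∈ T, (z : ℤ) ^ i : ℤ) : ZMod p)
          = ((∑ z ∈ S \ S', (z : ℤ) ^ i : ℤ) : ZMod p) := by
        rwa [ZMod.intCast_eq_intCast_iff']
      push_cast at hcast
      exact hcast
    have hbound : ∀ x ∈ S, x < p := by
      intro x hx
      have := Finset.mem_Icc.mp (hS hx)
      omega
    have hk : (S \ S').card < p := by
      have h1 : (S \ S').card ≤ S.card := Finset.card_le_card (Finset.sdiff_subset)
      have h2 : S.card ≤ (Finset.Icc 1 (2 * N)).card := Finset.card_le_card hS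
      rw [Nat.card_Icc] at h2
      omega
    exact mn_eq p hp T (S \ S')
      (fun x hx => hbound x (hTS hx))
      (fun x hx => hbound x (Finset.sdiff_subset hx))
      (hcard.trans rfl)
      (mn_esymm p hp hk T (S \ S') hcard rfl hZ)
  · rintro rfl
    refine ⟨rfl, fun i _ _ => ?_⟩
    rw [hdiff i]
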